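/- Let X1,...,Xk be i.i.d. PB(p_1,...,p_n) random variables, and let Y1,...,Yk be PB(p_1,...,p_n) random variables that may share underlying Bernoulli variables: there is a ground set Z of independent Bernoullis and subsets Z_j ⊆ Z with Y_j = Σ_{Z∈Z_j} Z, where each Y_j has marginal distribution PB(p_1,...,p_n). Then E[max_{j∈[k]} X_j] ≥ E[max_{j∈[k]} Y_j]. -/

import Mathlib

/-- Weight of a Bernoulli(`p`) outcome: `p` if success, `1 - p` otherwise. -/
def bw (p : ℝ) (b : Bool) : ℝ := if b then p else 1 - p

lemma bw_nonneg {p : ℝ} (h0 : 0 ≤ p) (h1 : p ≤ 1) (b : Bool) : 0 ≤ bw p b := by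
  cases b <;> simp [bw] <;> linarith

lemma bw_sum (p : ℝ) : bw p true + bw p false = 1 := by simp [bw]

/-- Total mass of the product Bernoulli weight is `1`. -/
lemma sum_W {ι : Type*} [Fintype ι] [DecidableEq ι] (q : ι → ℝ) :
    ∑ z : ι → Bool, ∏ i, bw (q i) (z i) = 1 := by
  rw [← Fintype.prod_sum]
  simp [Fintype.sum_bool, bw_sum]

lemma twopoint {w0 w1 a0 a1 c0 c1 : ℝ} (h0 : 0 ≤ w0) (h1 : 0 ≤ w1) (hw : w0 + w1 = 1)
    (hac : 0 ≤ (a0 - a1) * (c0 - c1)) :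
    (w0 * a0 + w1 * a1) * (w0 * c0 + w1 * c1) ≤ w0 * (a0 * c0) + w1 * (a1 * c1) := by
  have hw1 : w1 = 1 - w0 := by linarith
  subst hw1
  nlinarith [mul_nonneg (mul_nonneg h0 h1) hac]

lemma cons_le_cons {m : ℕ} {b b' : Bool} {y y' : Fin m → Bool} (hb : b ≤ b') (hy : y ≤ y') :
    (Fin.cons b y : Fin (m + 1) → Bool) ≤ Fin.cons b' y' := by
  intro i
  refine Fin.cases ?_ ?_ i
  · simpa using hb
  · intro j; simpa using hy j

lemma sum_succ {m : ℕ} (h : (Fin (m + 1) → Bool) → ℝ) :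
    ∑ z, h z = ∑ b : Bool, ∑ y : Fin m → Bool, h (Fin.cons b y) := by
  rw [← Equiv.sum_comp (Fin.consEquiv fun _ : Fin (m + 1) => Bool) h, Fintype.sum_prod_type]
  rfl

/-- Harris inequality for two antitone functions on a finite product of Bernoullis. -/
lemma harris_pair : ∀ (m : ℕ) (q : Fin m → ℝ), (∀ i, 0 ≤ q i ∧ q i ≤ 1) →
    ∀ f g : (Fin m → Bool) → ℝ, Antitone f → Antitone g →
    (∑ z, (∏ i, bw (q i) (z i)) * f z) * (∑ z, (∏ i, bw (q i) (z i)) * g z) ≤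
      ∑ z, (∏ i, bw (q i) (z i)) * (f z * g z) := by
  intro m
  induction m with
  | zero =>
    intro q hq f g hf hg
    have : ∀ h : (Fin 0 → Bool) → ℝ,
        (∑ z, (∏ i, bw (q i) (z i)) * h z) = h default := by
      intro h
      rw [Fintype.sum_unique]
      have : (default : Fin 0 → Bool) = fun a : Fin 0 => a.elim0 := funext fun a => a.elim0
      simp [this]
      exact congrArg h (funext fun a => a.elim0)
    rw [this, this, this]

  | succ m ih =>
    intro q hq f g hf hg
    set q' : Fin m → ℝ := fun i => q i.succ with hq'
    set W' : (Fin m → Bool) → ℝ := fun y => ∏ i, bw (q' i) (y i) with hW'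
    have hsum : ∀ h : (Fin (m + 1) → Bool) → ℝ,
        (∑ z, (∏ i, bw (q i) (z i)) * h z)
          = bw (q 0) true * (∑ y, W' y * h (Fin.cons true y))
            + bw (q 0) false * (∑ y, W' y * h (Fin.cons false y)) := by
      intro h
      rw [sum_succ (fun z => (∏ i, bw (q i) (z i)) * h z), Fintype.sum_bool]
      congr 1 <;>
      · rw [Finset.mul_sum]
        refine Finset.sum_congr rfl fun y _ => ?_
        rw [Fin.prod_univ_succ]
        simp only [Fin.cons_zero, Fin.cons_succ, hW', hq']
        ring
    have hW'nn : ∀ y : Fin m → Bool, 0 ≤ W' y := fun y =>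
      Finset.prod_nonneg fun i _ => bw_nonneg (hq i.succ).1 (hq i.succ).2 _
    set F : Bool → ℝ := fun b => ∑ y, W' y * f (Fin.cons b y) with hF
    set G : Bool → ℝ := fun b => ∑ y, W' y * g (Fin.cons b y) with hG
    have hFle : F true ≤ F false := by
      refine Finset.sum_le_sum fun y _ => ?_
      exact mul_le_mul_of_nonneg_left
        (hf (cons_le_cons (by simp) le_rfl)) (hW'nn y)
    have hGle : G true ≤ G false := by
      refine Finset.sum_le_sum fun y _ => ?_
      exact mul_le_mul_of_nonneg_left
        (hg (cons_le_cons (by simp) le_rfl)) (hW'nn y)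
    have hkey : ∀ b, F b * G b ≤ ∑ y, W' y * (f (Fin.cons b y) * g (Fin.cons b y)) := by
      intro b
      exact ih q' (fun i => hq i.succ) _ _
        (fun y y' hyy => hf (cons_le_cons le_rfl hyy))
        (fun y y' hyy => hg (cons_le_cons le_rfl hyy))
    rw [hsum f, hsum g, hsum (fun z => f z * g z)]
    have h0t : 0 ≤ bw (q 0) true := bw_nonneg (hq 0).1 (hq 0).2 _
    have h0f : 0 ≤ bw (q 0) false := bw_nonneg (hq 0).1 (hq 0).2 _
    calc (bw (q 0) true * F true + bw (q 0) false * F false)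
          * (bw (q 0) true * G true + bw (q 0) false * G false)
        ≤ bw (q 0) true * (F true * G true) + bw (q 0) false * (F false * G false) :=
          twopoint h0t h0f (bw_sum (q 0))
            (by nlinarith [mul_nonneg (sub_nonneg.2 hFle) (sub_nonneg.2 hGle)])
      _ ≤ _ :=
          add_le_add (mul_le_mul_of_nonneg_left (hkey true) h0t)
            (mul_le_mul_of_nonneg_left (hkey false) h0f)

/-- Harris inequality for a product of antitone nonnegative functions. -/
lemma harris_prod (m : ℕ) (q : Fin m → ℝ) (hq : ∀ i, 0 ≤ q i ∧ q i ≤ 1) :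
    ∀ (k : ℕ) (g : Fin k → (Fin m → Bool) → ℝ), (∀ j, Antitone (g j)) →
    (∀ j z, 0 ≤ g j z) →
    (∏ j, ∑ z, (∏ i, bw (q i) (z i)) * g j z)
      ≤ ∑ z, (∏ i, bw (q i) (z i)) * ∏ j, g j z := by
  intro k
  induction k with
  | zero =>
    intro g _ _
    simp [sum_W q]
  | succ k ih =>
    intro g hA h0
    have hWnn : ∀ z : Fin m → Bool, 0 ≤ ∏ i, bw (q i) (z i) := fun z =>
      Finset.prod_nonneg fun i _ => bw_nonneg (hq i).1 (hq i).2 _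
    have ihs := ih (fun j => g j.succ) (fun j => hA j.succ) (fun j => h0 j.succ)
    have hE0 : 0 ≤ ∑ z, (∏ i, bw (q i) (z i)) * g 0 z :=
      Finset.sum_nonneg fun z _ => mul_nonneg (hWnn z) (h0 0 z)
    have hPanti : Antitone fun z : Fin m → Bool => ∏ j : Fin k, g j.succ z := by
      intro z z' hzz'
      exact Finset.prod_le_prod (fun j _ => h0 j.succ z') (fun j _ => hA j.succ hzz')
    calc ∏ j : Fin (k + 1), ∑ z, (∏ i, bw (q i) (z i)) * g j z
        = (∑ z, (∏ i, bw (q i) (z i)) * g 0 z)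
            * ∏ j : Fin k, ∑ z, (∏ i, bw (q i) (z i)) * g j.succ z := by
          rw [Fin.prod_univ_succ]
      _ ≤ (∑ z, (∏ i, bw (q i) (z i)) * g 0 z)
            * ∑ z, (∏ i, bw (q i) (z i)) * ∏ j : Fin k, g j.succ z :=
          mul_le_mul_of_nonneg_left ihs hE0
      _ ≤ ∑ z, (∏ i, bw (q i) (z i)) * (g 0 z * ∏ j : Fin k, g j.succ z) :=
          harris_pair m q hq (g 0) _ (hA 0) hPanti
      _ = ∑ z, (∏ i, bw (q i) (z i)) * ∏ j : Fin (k + 1), g j z := by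
          refine Finset.sum_congr rfl fun z _ => ?_
          rw [Fin.prod_univ_succ]

/-- Marginalisation: the distribution of a sum over a subset of ground Bernoullis that
is in probability-preserving bijection with `Fin n` equals the `PB(p)` distribution. -/
lemma marginal {m n : ℕ} (q : Fin m → ℝ) (p : Fin n → ℝ) (s : Finset (Fin m))
    (g : Fin n → Fin m) (hginj : Function.Injective g) (him : Finset.univ.image g = s)
    (hqp : ∀ i, q (g i) = p i) (φ : ℕ → ℝ) :
    ∑ z : Fin m → Bool, (∏ i, bw (q i) (z i)) * φ (∑ i ∈ s, if z i then 1 else 0) =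
    ∑ x : Fin n → Bool, (∏ i, bw (p i) (x i)) * φ (∑ i, if x i then 1 else 0) := by
  classical
  set e := (Equiv.piEquivPiSubtypeProd (fun i => i ∈ s) fun _ : Fin m => Bool).symm with he
  rw [← Equiv.sum_comp e
    (fun z : Fin m → Bool => (∏ i, bw (q i) (z i)) * φ (∑ i ∈ s, if z i then 1 else 0)),
    Fintype.sum_prod_type]
  have hprod : ∀ (u : {x : Fin m // x ∈ s} → Bool) (v : {x : Fin m // ¬x ∈ s} → Bool),
      (∏ i, bw (q i) (e (u, v) i)) =
        (∏ ii : {x : Fin m // x ∈ s}, bw (q ii) (u ii))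
          * ∏ ii : {x : Fin m // ¬x ∈ s}, bw (q ii) (v ii) := by
    intro u v
    rw [← Fintype.prod_subtype_mul_prod_subtype (fun i => i ∈ s)
      (fun i => bw (q i) (e (u, v) i))]
    congr 1
    · refine Finset.prod_congr (by ext x; simp) fun ii _ => by
        simp [he, Equiv.piEquivPiSubtypeProd_symm_apply, ii.2]
    · refine Finset.prod_congr (by ext x; simp) fun ii _ => by
        simp [he, Equiv.piEquivPiSubtypeProd_symm_apply, ii.2]
  have hcount : ∀ (u : {x : Fin m // x ∈ s} → Bool) (v : {x : Fin m // ¬x ∈ s} → Bool),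
      (∑ i ∈ s, if e (u, v) i then (1 : ℕ) else 0)
        = ∑ ii : {x : Fin m // x ∈ s}, if u ii then 1 else 0 := by
    intro u v
    rw [← Finset.sum_coe_sort s (fun i => if e (u, v) i then (1 : ℕ) else 0)]
    refine Finset.sum_congr (by ext x; simp) fun ii _ => by
      simp [he, Equiv.piEquivPiSubtypeProd_symm_apply, ii.2]
  have step1 : ∀ u : {x : Fin m // x ∈ s} → Bool,
      (∑ v : {x : Fin m // ¬x ∈ s} → Bool,
          (∏ i, bw (q i) (e (u, v) i)) * φ (∑ i ∈ s, if e (u, v) i then 1 else 0))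
        = (∏ ii : {x : Fin m // x ∈ s}, bw (q ii) (u ii))
            * φ (∑ ii : {x : Fin m // x ∈ s}, if u ii then 1 else 0) := by
    intro u
    calc (∑ v : {x : Fin m // ¬x ∈ s} → Bool,
            (∏ i, bw (q i) (e (u, v) i)) * φ (∑ i ∈ s, if e (u, v) i then 1 else 0))
        = ∑ v : {x : Fin m // ¬x ∈ s} → Bool,
            ((∏ ii : {x : Fin m // x ∈ s}, bw (q ii) (u ii))
              * φ (∑ ii : {x : Fin m // x ∈ s}, if u ii then 1 else 0))
              * ∏ ii : {x : Fin m // ¬x ∈ s}, bw (q ii) (v ii) := by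
          refine Finset.sum_congr rfl fun v _ => ?_
          rw [hprod u v, hcount u v]; ring
      _ = ((∏ ii : {x : Fin m // x ∈ s}, bw (q ii) (u ii))
              * φ (∑ ii : {x : Fin m // x ∈ s}, if u ii then 1 else 0))
            * ∑ v : {x : Fin m // ¬x ∈ s} → Bool,
                ∏ ii : {x : Fin m // ¬x ∈ s}, bw (q ii) (v ii) := by
          rw [← Finset.mul_sum]
      _ = _ := by rw [sum_W (fun ii : {x : Fin m // ¬x ∈ s} => q ii), mul_one]
  rw [Finset.sum_congr rfl fun u _ => step1 u]
  -- reindex by the bijection `Fin n ≃ {x // x ∈ s}`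
  have hgmem : ∀ i, g i ∈ s := fun i => him ▸ Finset.mem_image_of_mem g (Finset.mem_univ i)
  have hg'bij : Function.Bijective (fun i => (⟨g i, hgmem i⟩ : {x : Fin m // x ∈ s})) := by
    constructor
    · intro a b hab
      exact hginj (congrArg Subtype.val hab)
    · rintro ⟨i, hi⟩
      rw [← him] at hi
      obtain ⟨a, -, ha⟩ := Finset.mem_image.1 hi
      exact ⟨a, Subtype.ext ha⟩
  set e1 : Fin n ≃ {x : Fin m // x ∈ s} := Equiv.ofBijective _ hg'bij with he1
  rw [← Equiv.sum_comp (Equiv.arrowCongr e1 (Equiv.refl Bool))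
    (fun u : {x : Fin m // x ∈ s} → Bool =>
      (∏ ii : {x : Fin m // x ∈ s}, bw (q ii) (u ii))
        * φ (∑ ii : {x : Fin m // x ∈ s}, if u ii then 1 else 0))]
  refine Finset.sum_congr rfl fun x _ => ?_
  have h1 : ∀ ii : {x : Fin m // x ∈ s},
      (Equiv.arrowCongr e1 (Equiv.refl Bool)) x ii = x (e1.symm ii) := fun ii => rfl
  have h2 : (∏ ii : {x : Fin m // x ∈ s}, bw (q ii) (x (e1.symm ii)))
      = ∏ i : Fin n, bw (p i) (x i) := by
    rw [← Equiv.prod_comp e1 (fun ii => bw (q ii) (x (e1.symm ii)))]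
    refine Finset.prod_congr rfl fun i _ => ?_
    rw [Equiv.symm_apply_apply]
    have : ((e1 i : {x : Fin m // x ∈ s}) : Fin m) = g i := rfl
    rw [this, hqp i]
  have h3 : (∑ ii : {x : Fin m // x ∈ s}, if x (e1.symm ii) then (1 : ℕ) else 0)
      = ∑ i : Fin n, if x i then 1 else 0 := by
    rw [← Equiv.sum_comp e1 (fun ii => if x (e1.symm ii) then (1 : ℕ) else 0)]
    refine Finset.sum_congr rfl fun i _ => ?_
    rw [Equiv.symm_apply_apply]
  simp only [h1, h2, h3]

lemma nat_cast_eq_sum_levels {N n : ℕ} (h : N ≤ n) :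
    (N : ℝ) = ∑ t ∈ Finset.range n, (if t < N then (1 : ℝ) else 0) := by
  rw [Finset.sum_boole]
  have : (Finset.range n).filter (fun t => t < N) = Finset.range N := by
    ext t
    simp only [Finset.mem_filter, Finset.mem_range]
    omega
  rw [this, Finset.card_range]

lemma ind_max {k : ℕ} (N : Fin k → ℕ) (t : ℕ) :
    (if t < Finset.univ.sup N then (1 : ℝ) else 0)
      = 1 - ∏ j, (if N j ≤ t then (1 : ℝ) else 0) := by
  by_cases h : t < Finset.univ.sup N
  · rw [if_pos h]
    obtain ⟨j, -, hj⟩ := Finset.lt_sup_iff.1 h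
    have hz : (∏ j, (if N j ≤ t then (1 : ℝ) else 0)) = 0 :=
      Finset.prod_eq_zero (Finset.mem_univ j) (if_neg (by omega))
    rw [hz]
    ring
  · rw [if_neg h]
    rw [Finset.prod_eq_one fun j _ =>
      if_pos (le_trans (Finset.le_sup (Finset.mem_univ j)) (not_lt.1 h))]
    ring

theorem exp_max_independent_better (n k ℓ : ℕ) (p : Fin n → ℝ) (ρ : Fin ℓ → ℝ)
    (hp : ∀ i, 0 ≤ p i ∧ p i ≤ 1) (hρ : ∀ i, 0 ≤ ρ i ∧ ρ i ≤ 1)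
    (Zs : Fin k → Finset (Fin ℓ))
    (hmarg : ∀ j, ∃ g : Fin n → Fin ℓ, Function.Injective g ∧
      Finset.univ.image g = Zs j ∧ ∀ i, ρ (g i) = p i) :
    (∑ z : Fin ℓ → Bool,
        (∏ i, bw (ρ i) (z i)) *
          (((Finset.univ.sup fun j : Fin k =>
            ∑ i ∈ Zs j, if z i then (1 : ℕ) else 0 : ℕ)) : ℝ)) ≤
    ∑ x : Fin k → Fin n → Bool,
      (∏ j, ∏ i, bw (p i) (x j i)) *
        (((Finset.univ.sup fun j : Fin k =>
          ∑ i : Fin n, if x j i then (1 : ℕ) else 0 : ℕ)) : ℝ) := by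
  classical
  -- the common cdf value
  set c : ℕ → ℝ := fun t => ∑ a : Fin n → Bool,
    (∏ i, bw (p i) (a i)) * (if (∑ i, if a i then (1 : ℕ) else 0) ≤ t then (1 : ℝ) else 0)
    with hc
  have hcard : ∀ j, (Zs j).card = n := by
    intro j
    obtain ⟨g, hg1, hg2, -⟩ := hmarg j
    rw [← hg2, Finset.card_image_of_injective _ hg1, Finset.card_univ, Fintype.card_fin]
  have hS_le : ∀ (j) (z : Fin ℓ → Bool), (∑ i ∈ Zs j, if z i then (1 : ℕ) else 0) ≤ n := by
    intro j z
    calc (∑ i ∈ Zs j, if z i then (1 : ℕ) else 0) ≤ ∑ _i ∈ Zs j, 1 :=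
          Finset.sum_le_sum fun i _ => by split <;> omega
      _ = (Zs j).card := by rw [Finset.sum_const, smul_eq_mul, mul_one]
      _ = n := hcard j
  have hT_le : ∀ a : Fin n → Bool, (∑ i, if a i then (1 : ℕ) else 0) ≤ n := by
    intro a
    calc (∑ i, if a i then (1 : ℕ) else 0) ≤ ∑ _i : Fin n, 1 :=
          Finset.sum_le_sum fun i _ => by split <;> omega
      _ = n := by simp
  -- LHS bound
  have LHSle : (∑ z : Fin ℓ → Bool,
        (∏ i, bw (ρ i) (z i)) *
          (((Finset.univ.sup fun j : Fin k =>
            ∑ i ∈ Zs j, if z i then (1 : ℕ) else 0 : ℕ)) : ℝ))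
      ≤ ∑ t ∈ Finset.range n, (1 - ∏ _j : Fin k, c t) := by
    have h1 : ∀ z : Fin ℓ → Bool,
        (∏ i, bw (ρ i) (z i)) *
          (((Finset.univ.sup fun j : Fin k =>
            ∑ i ∈ Zs j, if z i then (1 : ℕ) else 0 : ℕ)) : ℝ)
        = ∑ t ∈ Finset.range n,
            ((∏ i, bw (ρ i) (z i)) - (∏ i, bw (ρ i) (z i))
              * ∏ j : Fin k,
                  (if (∑ i ∈ Zs j, if z i then (1 : ℕ) else 0) ≤ t then (1 : ℝ) else 0)) := by
      intro z
      rw [nat_cast_eq_sum_levels (Finset.sup_le fun j _ => hS_le j z), Finset.mul_sum]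
      refine Finset.sum_congr rfl fun t _ => ?_
      rw [ind_max]
      ring
    rw [Finset.sum_congr rfl fun z _ => h1 z, Finset.sum_comm]
    refine Finset.sum_le_sum fun t _ => ?_
    rw [Finset.sum_sub_distrib, sum_W ρ]
    refine sub_le_sub_left ?_ 1
    have hanti : ∀ j : Fin k, Antitone fun z : Fin ℓ → Bool =>
        (if (∑ i ∈ Zs j, if z i then (1 : ℕ) else 0) ≤ t then (1 : ℝ) else 0) := by
      intro j z z' hzz'
      dsimp only
      have hS : (∑ i ∈ Zs j, if z i then (1 : ℕ) else 0)
          ≤ ∑ i ∈ Zs j, if z' i then (1 : ℕ) else 0 := by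
        refine Finset.sum_le_sum fun i _ => ?_
        have hle : z i ≤ z' i := hzz' i
        cases hz : z i
        · simp [hz]
        · have hz' : z' i = true := by
            cases hz2 : z' i
            · rw [hz, hz2] at hle; exact absurd hle (by decide)
            · rfl
          simp [hz, hz']
      by_cases h : (∑ i ∈ Zs j, if z' i then (1 : ℕ) else 0) ≤ t
      · rw [if_pos h, if_pos (le_trans hS h)]
      · rw [if_neg h]
        split <;> norm_num
    have hnn : ∀ (j : Fin k) (z : Fin ℓ → Bool),
        (0 : ℝ) ≤ (if (∑ i ∈ Zs j, if z i then (1 : ℕ) else 0) ≤ t then (1 : ℝ) else 0) := by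
      intro j z; split <;> norm_num
    calc (∏ _j : Fin k, c t)
        = ∏ j : Fin k, ∑ z : Fin ℓ → Bool, (∏ i, bw (ρ i) (z i))
            * (if (∑ i ∈ Zs j, if z i then (1 : ℕ) else 0) ≤ t then (1 : ℝ) else 0) := by
          refine Finset.prod_congr rfl fun j _ => ?_
          obtain ⟨g, hg1, hg2, hg3⟩ := hmarg j
          rw [hc]
          exact (marginal ρ p (Zs j) g hg1 hg2 hg3
            (fun N => if N ≤ t then (1 : ℝ) else 0)).symm
      _ ≤ _ := harris_prod ℓ ρ hρ k _ hanti hnn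
  -- RHS equality
  have RHSeq : (∑ x : Fin k → Fin n → Bool,
      (∏ j, ∏ i, bw (p i) (x j i)) *
        (((Finset.univ.sup fun j : Fin k =>
          ∑ i : Fin n, if x j i then (1 : ℕ) else 0 : ℕ)) : ℝ))
      = ∑ t ∈ Finset.range n, (1 - ∏ _j : Fin k, c t) := by
    have h1 : ∀ x : Fin k → Fin n → Bool,
        (∏ j, ∏ i, bw (p i) (x j i)) *
          (((Finset.univ.sup fun j : Fin k =>
            ∑ i : Fin n, if x j i then (1 : ℕ) else 0 : ℕ)) : ℝ)
        = ∑ t ∈ Finset.range n,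
            ((∏ j, ∏ i, bw (p i) (x j i))
              - ∏ j : Fin k, ((∏ i, bw (p i) (x j i))
                  * (if (∑ i, if x j i then (1 : ℕ) else 0) ≤ t then (1 : ℝ) else 0))) := by
      intro x
      rw [nat_cast_eq_sum_levels (Finset.sup_le fun j _ => hT_le (x j)), Finset.mul_sum]
      refine Finset.sum_congr rfl fun t _ => ?_
      rw [ind_max, Finset.prod_mul_distrib]
      ring
    rw [Finset.sum_congr rfl fun x _ => h1 x, Finset.sum_comm]
    refine Finset.sum_congr rfl fun t _ => ?_
    rw [Finset.sum_sub_distrib]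
    have hA : (∑ x : Fin k → Fin n → Bool, ∏ j, ∏ i, bw (p i) (x j i)) = 1 := by
      rw [← Fintype.prod_sum (fun _ : Fin k => fun a : Fin n → Bool => ∏ i, bw (p i) (a i))]
      rw [Finset.prod_congr rfl fun j _ => sum_W p]
      exact Finset.prod_const_one
    have hB : (∑ x : Fin k → Fin n → Bool, ∏ j : Fin k, ((∏ i, bw (p i) (x j i))
          * (if (∑ i, if x j i then (1 : ℕ) else 0) ≤ t then (1 : ℝ) else 0)))
        = ∏ _j : Fin k, c t := by
      rw [← Fintype.prod_sum (fun _ : Fin k => fun a : Fin n → Bool =>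
        (∏ i, bw (p i) (a i)) * (if (∑ i, if a i then (1 : ℕ) else 0) ≤ t then (1 : ℝ) else 0))]
    rw [hA, hB]
  calc _ ≤ ∑ t ∈ Finset.range n, (1 - ∏ _j : Fin k, c t) := LHSle
    _ = _ := RHSeq.symm
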